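/- Let G be a nontrivial finite group and m > 1. The Cayley graph G_m(G) = Cay(G^m, S) is regular of degree binom(m+1, 2)·(|G| − 1), has |G|^m vertices, and every pair of adjacent vertices has exactly |G| + 2m − 4 common neighbours (i.e. G_m(G) is edge-regular with parameters (|G|^m, binom(m+1,2)(|G|−1), |G|+2m−4)). -/

import Mathlib

namespace CayleyStmt7

variable {G : Type*}

def intvl [Group G] (m : ℕ) (x : G) (k l : ℕ) : Fin m → G :=
  fun i => if k ≤ i.1 + 1 ∧ i.1 + 1 < l then x else 1

def cS (G : Type*) [Group G] (m : ℕ) : Set (Fin m → G) :=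
  {v | ∃ (x : G) (k l : ℕ), x ≠ 1 ∧ 1 ≤ k ∧ k < l ∧ l ≤ m + 1 ∧ v = intvl m x k l}

def cAdj [Group G] (m : ℕ) (g h : Fin m → G) : Prop := h * g⁻¹ ∈ cS G m

section helpers
variable [Group G]

lemma intvl_inv (m : ℕ) (x : G) (k l : ℕ) :
    (intvl m x k l)⁻¹ = intvl m x⁻¹ k l := by
  funext i
  simp only [Pi.inv_apply, intvl]
  split_ifs <;> simp

lemma intvl_mul_eq (m : ℕ) (x y z : G) (a b c d k l : ℕ)
    (h : ∀ j, 1 ≤ j → j ≤ m →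
      (if a ≤ j ∧ j < b then y else 1) =
        (if c ≤ j ∧ j < d then z else 1) * (if k ≤ j ∧ j < l then x else 1)) :
    intvl m y a b = intvl m z c d * intvl m x k l := by
  funext i
  simpa [intvl] using h (i.1 + 1) (by omega) (by omega)

lemma intvl_mul_forall (m : ℕ) (x y z : G) (a b c d k l : ℕ)
    (h : intvl m y a b = intvl m z c d * intvl m x k l) :
    ∀ j, 1 ≤ j → j ≤ m →
      (if a ≤ j ∧ j < b then y else 1) =
        (if c ≤ j ∧ j < d then z else 1) * (if k ≤ j ∧ j < l then x else 1) := by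
  intro j h1 h2
  have := congrFun h ⟨j - 1, by omega⟩
  simpa [intvl, Nat.sub_add_cancel h1] using this

lemma intvl_inj (m : ℕ) (x y : G) (k l a b : ℕ) (hx : x ≠ 1) (hy : y ≠ 1)
    (hk : 1 ≤ k) (hkl : k < l) (hl : l ≤ m + 1)
    (ha : 1 ≤ a) (hab : a < b) (hb : b ≤ m + 1)
    (h : intvl m x k l = intvl m y a b) : x = y ∧ k = a ∧ l = b := by
  have e : ∀ j, 1 ≤ j → j ≤ m →
      (if k ≤ j ∧ j < l then x else 1) = (if a ≤ j ∧ j < b then y else 1) := by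
    intro j h1 h2
    have := congrFun h ⟨j - 1, by omega⟩
    simpa [intvl, Nat.sub_add_cancel h1] using this
  have e1 := e k (by omega) (by omega)
  rw [if_pos ⟨le_rfl, hkl⟩] at e1
  have hk' : a ≤ k ∧ k < b := by
    by_contra hc
    rw [if_neg hc] at e1; exact hx e1
  rw [if_pos hk'] at e1
  have e2 := e a (by omega) (by omega)
  have ha' : k ≤ a ∧ a < l := by
    by_contra hc
    rw [if_neg hc, if_pos (show a ≤ a ∧ a < b from ⟨le_rfl, hab⟩)] at e2
    exact hy e2.symm
  have hka : k = a := le_antisymm ha'.1 hk'.1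
  have e3 := e (l - 1) (by omega) (by omega)
  rw [if_pos ⟨by omega, by omega⟩] at e3
  have hl' : a ≤ l - 1 ∧ l - 1 < b := by
    by_contra hc
    rw [if_neg hc] at e3; exact hx e3
  have e4 := e (b - 1) (by omega) (by omega)
  have hb' : k ≤ b - 1 ∧ b - 1 < l := by
    by_contra hc
    rw [if_neg hc, if_pos (show a ≤ b - 1 ∧ b - 1 < b from ⟨by omega, by omega⟩)] at e4
    exact hy e4.symm
  exact ⟨e1, hka, by omega⟩


lemma key (m : ℕ) (x y z : G) (hx : x ≠ 1) (hy : y ≠ 1) (hz : z ≠ 1)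
    (k l a b c d : ℕ) (hk : 1 ≤ k) (hkl : k < l) (hl : l ≤ m + 1)
    (ha : 1 ≤ a) (hab : a < b) (hb : b ≤ m + 1)
    (hc : 1 ≤ c) (hcd : c < d) (hd : d ≤ m + 1)
    (H : ∀ j, 1 ≤ j → j ≤ m →
      (if a ≤ j ∧ j < b then y else 1) =
        (if c ≤ j ∧ j < d then z else 1) * (if k ≤ j ∧ j < l then x else 1)) :
    (a = k ∧ b = l ∧ y ≠ x) ∨ (y = x ∧ b = l ∧ a ≠ k) ∨ (y = x ∧ a = k ∧ b ≠ l) ∨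
      (y = x⁻¹ ∧ b = k) ∨ (y = x⁻¹ ∧ a = l) := by
  have hIcup : ∀ j, a ≤ j → j < b → (c ≤ j ∧ j < d) ∨ (k ≤ j ∧ j < l) := by
    intro j h1 h2
    by_contra hcon
    have h := H j (by omega) (by omega)
    rw [if_pos (show a ≤ j ∧ j < b from ⟨h1, h2⟩),
      if_neg (fun hh => hcon (Or.inl hh)), if_neg (fun hh => hcon (Or.inr hh)),
      one_mul] at h
    exact hy h
  have hCsub : ∀ j, c ≤ j → j < d → ¬(k ≤ j ∧ j < l) → (a ≤ j ∧ j < b) ∧ y = z := by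
    intro j h1 h2 hK
    have h := H j (by omega) (by omega)
    rw [if_pos (show c ≤ j ∧ j < d from ⟨h1, h2⟩), if_neg hK, mul_one] at h
    by_cases hI : a ≤ j ∧ j < b
    · rw [if_pos hI] at h; exact ⟨hI, h⟩
    · rw [if_neg hI] at h; exact absurd h.symm hz
  have hKsub : ∀ j, k ≤ j → j < l → ¬(c ≤ j ∧ j < d) → (a ≤ j ∧ j < b) ∧ y = x := by
    intro j h1 h2 hC
    have h := H j (by omega) (by omega)
    rw [if_pos (show k ≤ j ∧ j < l from ⟨h1, h2⟩), if_neg hC, one_mul] at h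
    by_cases hI : a ≤ j ∧ j < b
    · rw [if_pos hI] at h; exact ⟨hI, h⟩
    · rw [if_neg hI] at h; exact absurd h.symm hx
  have hBothIn : ∀ j, c ≤ j → j < d → k ≤ j → j < l → a ≤ j → j < b → y = z * x := by
    intro j h1 h2 h3 h4 h5 h6
    have h := H j (by omega) (by omega)
    rw [if_pos (show a ≤ j ∧ j < b from ⟨h5, h6⟩),
      if_pos (show c ≤ j ∧ j < d from ⟨h1, h2⟩),
      if_pos (show k ≤ j ∧ j < l from ⟨h3, h4⟩)] at h
    exact h
  have hBothOut : ∀ j, c ≤ j → j < d → k ≤ j → j < l → ¬(a ≤ j ∧ j < b) → z * x = 1 := by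
    intro j h1 h2 h3 h4 hI
    have h := H j (by omega) (by omega)
    rw [if_neg hI, if_pos (show c ≤ j ∧ j < d from ⟨h1, h2⟩),
      if_pos (show k ≤ j ∧ j < l from ⟨h3, h4⟩)] at h
    exact h.symm
  by_cases hdisj : d ≤ k ∨ l ≤ c
  · have hyx : y = x := (hKsub k le_rfl hkl (by omega)).2
    have hKI := fun j h1 h2 => (hKsub j h1 h2 (by omega)).1
    have hCI := fun j h1 h2 => hCsub j h1 h2 (by omega)
    have p1 := (hCI c le_rfl hcd).1
    have p2 := (hCI (d - 1) (by omega) (by omega)).1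
    have p3 := hKI k le_rfl hkl
    have p4 := hKI (l - 1) (by omega) (by omega)
    have g1 := hIcup a le_rfl hab
    have g2 := hIcup (b - 1) (by omega) (by omega)
    rcases hdisj with hdk | hlc
    · have hgap : d = k := by
        by_contra hne
        have := hIcup d (by omega) (by omega)
        omega
      exact Or.inr (Or.inl ⟨hyx, by omega, by omega⟩)
    · have hgap : l = c := by
        by_contra hne
        have := hIcup l (by omega) (by omega)
        omega
      exact Or.inr (Or.inr (Or.inl ⟨hyx, by omega, by omega⟩))
  · by_cases hCK : k ≤ c ∧ d ≤ l
    · by_cases heq : c = k ∧ d = l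
      · obtain ⟨h1, h2⟩ := heq
        subst h1; subst h2
        have e1 := H a (by omega) (by omega)
        rw [if_pos (show a ≤ a ∧ a < b from ⟨le_rfl, hab⟩)] at e1
        have haK : c ≤ a ∧ a < d := by
          rcases hIcup a le_rfl hab with h | h
          exacts [h, h]
        rw [if_pos haK, if_pos haK] at e1
        have hKI : ∀ j, c ≤ j → j < d → a ≤ j ∧ j < b := by
          intro j h1 h2
          by_contra hcon
          have h := H j (by omega) (by omega)
          rw [if_neg hcon, if_pos (show c ≤ j ∧ j < d from ⟨h1, h2⟩),
            if_pos (show c ≤ j ∧ j < d from ⟨h1, h2⟩)] at h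
          exact hy (e1.trans h.symm)
        have q1 := hKI c le_rfl hcd
        have q2 := hKI (d - 1) (by omega) (by omega)
        have g1 := hIcup a le_rfl hab
        have g2 := hIcup (b - 1) (by omega) (by omega)
        refine Or.inl ⟨by omega, by omega, ?_⟩
        intro hyx
        rw [hyx] at e1
        exact hz (right_eq_mul.mp e1)
      · have hne : k < c ∨ d < l := by omega
        have hyx : y = x := by
          rcases hne with h | h
          · exact (hKsub k le_rfl hkl (by omega)).2
          · exact (hKsub d (by omega) h (by omega)).2
        have hCnotI : ∀ j, c ≤ j → j < d → ¬(a ≤ j ∧ j < b) := by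
          intro j h1 h2 hI
          have h := hBothIn j h1 h2 (by omega) (by omega) hI.1 hI.2
          rw [hyx] at h
          exact hz (right_eq_mul.mp h)
        have g1 := hIcup a le_rfl hab
        have g2 := hIcup (b - 1) (by omega) (by omega)
        have n1 : ¬(c ≤ a ∧ a < d) := fun hh => hCnotI a hh.1 hh.2 ⟨le_rfl, hab⟩
        have n2 : ¬(c ≤ b - 1 ∧ b - 1 < d) := fun hh =>
          hCnotI _ hh.1 hh.2 ⟨by omega, by omega⟩
        rcases hne with hkc | hdl
        · have q1 := (hKsub k le_rfl hkl (by omega)).1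
          have q2 := (hKsub (c - 1) (by omega) (by omega) (by omega)).1
          have hbc : b ≤ c := by
            by_contra hcon
            exact hCnotI c le_rfl hcd ⟨by omega, by omega⟩
          exact Or.inr (Or.inr (Or.inl ⟨hyx, by omega, by omega⟩))
        · have q1 := (hKsub d (by omega) hdl (by omega)).1
          have q2 := (hKsub (l - 1) (by omega) (by omega) (by omega)).1
          have hda : d ≤ a := by
            by_contra hcon
            exact hCnotI c le_rfl hcd ⟨by omega, by omega⟩
          exact Or.inr (Or.inl ⟨hyx, by omega, by omega⟩)
    · by_cases hKC : c ≤ k ∧ l ≤ d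
      · have hne : c < k ∨ l < d := by omega
        have hyz : y = z := by
          rcases hne with h | h
          · exact (hCsub c le_rfl hcd (by omega)).2
          · exact (hCsub l (by omega) h (by omega)).2
        have hKnotI : ∀ j, k ≤ j → j < l → ¬(a ≤ j ∧ j < b) := by
          intro j h1 h2 hI
          have h := hBothIn j (by omega) (by omega) h1 h2 hI.1 hI.2
          rw [hyz] at h
          exact hx (left_eq_mul.mp h)
        have hzx : z * x = 1 :=
          hBothOut k (by omega) (by omega) le_rfl hkl (hKnotI k le_rfl hkl)
        have hyx : y = x⁻¹ := hyz.trans (mul_eq_one_iff_eq_inv.mp hzx)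
        have g1 := hIcup a le_rfl hab
        have g2 := hIcup (b - 1) (by omega) (by omega)
        have n1 : ¬(k ≤ a ∧ a < l) := fun hh => hKnotI a hh.1 hh.2 ⟨le_rfl, hab⟩
        have n2 : ¬(k ≤ b - 1 ∧ b - 1 < l) := fun hh =>
          hKnotI _ hh.1 hh.2 ⟨by omega, by omega⟩
        rcases (by omega : a < k ∨ l ≤ a) with hak | hla
        · have hbk : b ≤ k := by
            by_contra hcon
            exact hKnotI k le_rfl hkl ⟨by omega, by omega⟩
          have q2 := (hCsub (k - 1) (by omega) (by omega) (by omega)).1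
          exact Or.inr (Or.inr (Or.inr (Or.inl ⟨hyx, by omega⟩)))
        · have q1 := (hCsub l (by omega) (by omega) (by omega)).1
          exact Or.inr (Or.inr (Or.inr (Or.inr ⟨hyx, by omega⟩)))
      · exfalso
        rcases (by omega : (c < k ∧ d < l) ∨ (k < c ∧ l < d)) with ⟨h1, h2⟩ | ⟨h1, h2⟩
        · have hyzq := hCsub c le_rfl hcd (by omega)
          have hyxq := hKsub d (by omega) h2 (by omega)
          have hbi := hBothIn k (by omega) (by omega) le_rfl hkl (by omega) (by omega)
          rw [hyzq.2] at hbi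
          exact hx (left_eq_mul.mp hbi)
        · have hyzq := hCsub l (by omega) h2 (by omega)
          have hyxq := hKsub k le_rfl hkl (by omega)
          have hbi := hBothIn c le_rfl hcd (by omega) (by omega) (by omega) (by omega)
          rw [hyzq.2] at hbi
          exact hx (left_eq_mul.mp hbi)

end helpers

def Tkl (m : ℕ) : Finset (ℕ × ℕ) :=
  (Finset.Icc 1 (m + 1)).biUnion fun l => (Finset.Ico 1 l).image fun k => (k, l)

lemma mem_Tkl {m : ℕ} {p : ℕ × ℕ} :
    p ∈ Tkl m ↔ 1 ≤ p.1 ∧ p.1 < p.2 ∧ p.2 ≤ m + 1 := by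
  obtain ⟨k, l⟩ := p
  simp only [Tkl, Finset.mem_biUnion, Finset.mem_image, Finset.mem_Icc,
    Finset.mem_Ico, Prod.mk.injEq]
  constructor
  · rintro ⟨l', hl', k', hk', rfl, rfl⟩
    omega
  · rintro ⟨h1, h2, h3⟩
    exact ⟨l, by omega, k, by omega, rfl, rfl⟩

lemma Tkl_card (m : ℕ) : (Tkl m).card = (m + 1).choose 2 := by
  rw [Tkl, Finset.card_biUnion]
  · have h1 : ∀ l ∈ Finset.Icc 1 (m + 1),
        ((Finset.Ico 1 l).image fun k => (k, l)).card = l - 1 := by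
      intro l _
      rw [Finset.card_image_of_injective _ (fun u v h => by simpa using h)]
      simp [Nat.card_Ico]
    rw [Finset.sum_congr rfl h1]
    have h2 : Finset.Icc 1 (m + 1) = Finset.image (· + 1) (Finset.range (m + 1)) := by
      ext j
      simp only [Finset.mem_Icc, Finset.mem_image, Finset.mem_range]
      constructor
      · intro hj; exact ⟨j - 1, by omega, by omega⟩
      · rintro ⟨i, hi, rfl⟩; omega
    rw [h2, Finset.sum_image (fun u _ v _ h => by omega)]
    simp only [Nat.add_sub_cancel]
    rw [Finset.sum_range_id, Nat.choose_two_right]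
  · intro u hu v hv huv
    rw [Function.onFun, Finset.disjoint_left]
    rintro p hp hp'
    simp only [Finset.mem_image] at hp hp'
    obtain ⟨k1, _, rfl⟩ := hp
    obtain ⟨k2, _, he⟩ := hp'
    have := congrArg Prod.snd he
    simp only at this
    exact huv this.symm

section main
variable [Group G] [Fintype G]

lemma degree_count (m : ℕ) (hm : 1 < m) (g : Fin m → G) :
    {h : Fin m → G | cAdj m g h}.ncard = Nat.choose (m + 1) 2 * (Fintype.card G - 1) := by
  classical
  have hset : {h : Fin m → G | cAdj m g h} =
      (fun p : G × ℕ × ℕ => intvl m p.1 p.2.1 p.2.2 * g) ''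
        ↑((Finset.univ.erase (1 : G)) ×ˢ Tkl m) := by
    ext v
    simp only [Set.mem_setOf_eq, cAdj, cS, Set.mem_image, Finset.mem_coe,
      Finset.mem_product, Finset.mem_erase, Finset.mem_univ, mem_Tkl]
    constructor
    · rintro ⟨x, k, l, hx, h1, h2, h3, hv⟩
      refine ⟨(x, k, l), ⟨⟨hx, trivial⟩, h1, h2, h3⟩, ?_⟩
      rw [← hv, inv_mul_cancel_right]
    · rintro ⟨⟨x, k, l⟩, ⟨⟨hx, -⟩, h1, h2, h3⟩, rfl⟩
      exact ⟨x, k, l, hx, h1, h2, h3, by rw [mul_inv_cancel_right]⟩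
  have hinj : Set.InjOn (fun p : G × ℕ × ℕ => intvl m p.1 p.2.1 p.2.2 * g)
      ↑((Finset.univ.erase (1 : G)) ×ˢ Tkl m) := by
    rintro ⟨x, k, l⟩ hp ⟨y, a, b⟩ hq he
    simp only [Finset.mem_coe, Finset.mem_product, Finset.mem_erase, Finset.mem_univ,
      mem_Tkl] at hp hq
    have he' := mul_right_cancel he
    obtain ⟨e1, e2, e3⟩ := intvl_inj m x y k l a b hp.1.1 hq.1.1
      hp.2.1 hp.2.2.1 hp.2.2.2 hq.2.1 hq.2.2.1 hq.2.2.2 he'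
    simp [e1, e2, e3]
  rw [hset, Set.ncard_image_of_injOn hinj, Set.ncard_coe_finset,
    Finset.card_product, Finset.card_erase_of_mem (Finset.mem_univ _),
    Finset.card_univ, Tkl_card, Nat.mul_comm]

lemma common_count (m : ℕ) (hm : 1 < m) (hG : 1 < Fintype.card G)
    (g h : Fin m → G) (hadj : cAdj m g h) :
    {v : Fin m → G | cAdj m g v ∧ cAdj m h v}.ncard = Fintype.card G + 2 * m - 4 := by
  classical
  obtain ⟨x, k, l, hx, hk, hkl, hl, hs⟩ := hadj
  have hxi : x⁻¹ ≠ 1 := fun e => hx (by rwa [inv_eq_one] at e)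
  set F1 : Finset (G × ℕ × ℕ) :=
    ((Finset.univ.erase (1 : G)).erase x).image (fun z => (z, k, l)) with hF1
  set F2 : Finset (G × ℕ × ℕ) :=
    ((Finset.Ico 1 l).erase k).image (fun a => (x, a, l)) with hF2
  set F3 : Finset (G × ℕ × ℕ) :=
    ((Finset.Ioc k (m + 1)).erase l).image (fun b => (x, k, b)) with hF3
  set F4 : Finset (G × ℕ × ℕ) :=
    (Finset.Ico 1 k).image (fun a => (x⁻¹, a, k)) with hF4
  set F5 : Finset (G × ℕ × ℕ) :=
    (Finset.Ioc l (m + 1)).image (fun b => (x⁻¹, l, b)) with hF5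
  set F := F1 ∪ F2 ∪ F3 ∪ F4 ∪ F5 with hF
  have hmem : ∀ (y' : G) (a' b' : ℕ), (y', a', b') ∈ F ↔
      ((a' = k ∧ b' = l ∧ y' ≠ 1 ∧ y' ≠ x) ∨
       (y' = x ∧ b' = l ∧ 1 ≤ a' ∧ a' < l ∧ a' ≠ k) ∨
       (y' = x ∧ a' = k ∧ k < b' ∧ b' ≤ m + 1 ∧ b' ≠ l) ∨
       (y' = x⁻¹ ∧ b' = k ∧ 1 ≤ a' ∧ a' < k) ∨
       (y' = x⁻¹ ∧ a' = l ∧ l < b' ∧ b' ≤ m + 1)) := by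
    intro y' a' b'
    simp only [hF, hF1, hF2, hF3, hF4, hF5, Finset.mem_union, Finset.mem_image,
      Finset.mem_erase, Finset.mem_univ, Finset.mem_Ico, Finset.mem_Ioc, and_true,
      Prod.mk.injEq]
    constructor
    · rintro ((((⟨z, ⟨hz1, hz2⟩, rfl, rfl, rfl⟩ | ⟨a, ⟨ha1, ha2⟩, rfl, rfl, rfl⟩) |
        ⟨b, ⟨hb1, hb2⟩, rfl, rfl, rfl⟩) | ⟨a, ha, rfl, rfl, rfl⟩) |
        ⟨b, hb, rfl, rfl, rfl⟩)
      · exact Or.inl ⟨rfl, rfl, hz2, hz1⟩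
      · exact Or.inr (Or.inl ⟨rfl, rfl, ha2.1, ha2.2, ha1⟩)
      · exact Or.inr (Or.inr (Or.inl ⟨rfl, rfl, hb2.1, hb2.2, hb1⟩))
      · exact Or.inr (Or.inr (Or.inr (Or.inl ⟨rfl, rfl, ha.1, ha.2⟩)))
      · exact Or.inr (Or.inr (Or.inr (Or.inr ⟨rfl, rfl, hb.1, hb.2⟩)))
    · rintro (⟨rfl, rfl, h1, h2⟩ | ⟨rfl, rfl, h1, h2, h3⟩ | ⟨rfl, rfl, h1, h2, h3⟩ |
        ⟨rfl, rfl, h1, h2⟩ | ⟨rfl, rfl, h1, h2⟩)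
      · exact Or.inl (Or.inl (Or.inl (Or.inl ⟨y', ⟨h2, h1⟩, rfl, rfl, rfl⟩)))
      · exact Or.inl (Or.inl (Or.inl (Or.inr ⟨a', ⟨h3, h1, h2⟩, rfl, rfl, rfl⟩)))
      · exact Or.inl (Or.inl (Or.inr ⟨b', ⟨h3, h1, h2⟩, rfl, rfl, rfl⟩))
      · exact Or.inl (Or.inr ⟨a', ⟨h1, h2⟩, rfl, rfl, rfl⟩)
      · exact Or.inr ⟨b', ⟨h1, h2⟩, rfl, rfl, rfl⟩
  have hcon : ∀ p : G × ℕ × ℕ, p ∈ F →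
      p.1 ≠ 1 ∧ 1 ≤ p.2.1 ∧ p.2.1 < p.2.2 ∧ p.2.2 ≤ m + 1 := by
    rintro ⟨y', a', b'⟩ hp
    rw [hmem] at hp
    show y' ≠ 1 ∧ 1 ≤ a' ∧ a' < b' ∧ b' ≤ m + 1
    rcases hp with ⟨e1, e2, h1, h2⟩ | ⟨e1, e2, h1, h2, h3⟩ | ⟨e1, e2, h1, h2, h3⟩ |
      ⟨e1, e2, h1, h2⟩ | ⟨e1, e2, h1, h2⟩ <;> rw [e1, e2]
    · exact ⟨h1, hk, hkl, hl⟩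
    · exact ⟨hx, h1, h2, hl⟩
    · exact ⟨hx, hk, h1, h2⟩
    · exact ⟨hxi, h1, h2, by omega⟩
    · exact ⟨hxi, by omega, h1, h2⟩
  have hstep : ∀ (w : G) (a b : ℕ), w ≠ 1 → 1 ≤ a → a < b → b ≤ m + 1 →
      ∀ (u : Fin m → G), u = intvl m w a b * intvl m x k l →
      u * (intvl m x k l)⁻¹ ∈ cS G m := by
    intro w a b h1 h2 h3 h4 u hu
    exact ⟨w, a, b, h1, h2, h3, h4, by rw [hu, mul_inv_cancel_right]⟩
  have hprodmem : ∀ p : G × ℕ × ℕ, p ∈ F →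
      intvl m p.1 p.2.1 p.2.2 * (intvl m x k l)⁻¹ ∈ cS G m := by
    rintro ⟨y', a', b'⟩ hp
    rw [hmem] at hp
    show intvl m y' a' b' * (intvl m x k l)⁻¹ ∈ cS G m
    rcases hp with ⟨e1, e2, h1, h2⟩ | ⟨e1, e2, h1, h2, h3⟩ | ⟨e1, e2, h1, h2, h3⟩ |
      ⟨e1, e2, h1, h2⟩ | ⟨e1, e2, h1, h2⟩ <;> rw [e1, e2]
    · exact hstep (y' * x⁻¹) k l (fun e => h2 (by rwa [mul_inv_eq_one] at e)) hk hkl hl _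
        (intvl_mul_eq m x y' (y' * x⁻¹) k l k l k l
          (fun j _ _ => by split_ifs <;> first | (exfalso; omega) | simp))
    · rcases (by omega : a' < k ∨ k < a') with hlt | hlt
      · exact hstep x a' k hx h1 hlt (by omega) _
          (intvl_mul_eq m x x x a' l a' k k l
            (fun j _ _ => by split_ifs <;> first | (exfalso; omega) | simp))
      · exact hstep x⁻¹ k a' hxi hk hlt (by omega) _
          (intvl_mul_eq m x x x⁻¹ a' l k a' k l
            (fun j _ _ => by split_ifs <;> first | (exfalso; omega) | simp))
    · rcases (by omega : b' < l ∨ l < b') with hlt | hlt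
      · exact hstep x⁻¹ b' l hxi (by omega) hlt hl _
          (intvl_mul_eq m x x x⁻¹ k b' b' l k l
            (fun j _ _ => by split_ifs <;> first | (exfalso; omega) | simp))
      · exact hstep x l b' hx (by omega) hlt h2 _
          (intvl_mul_eq m x x x k b' l b' k l
            (fun j _ _ => by split_ifs <;> first | (exfalso; omega) | simp))
    · exact hstep x⁻¹ a' l hxi h1 (by omega) hl _
        (intvl_mul_eq m x x⁻¹ x⁻¹ a' k a' l k l
          (fun j _ _ => by split_ifs <;> first | (exfalso; omega) | simp))
    · exact hstep x⁻¹ k b' hxi hk (by omega) h2 _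
        (intvl_mul_eq m x x⁻¹ x⁻¹ l b' k b' k l
          (fun j _ _ => by split_ifs <;> first | (exfalso; omega) | simp))
  have hset : {v : Fin m → G | cAdj m g v ∧ cAdj m h v} =
      (fun p : G × ℕ × ℕ => intvl m p.1 p.2.1 p.2.2 * g) '' ↑F := by
    ext v
    simp only [Set.mem_setOf_eq, Set.mem_image, Finset.mem_coe]
    constructor
    · rintro ⟨hv1, hv2⟩
      have hv1' : v * g⁻¹ ∈ cS G m := hv1
      have hv2' : v * h⁻¹ ∈ cS G m := hv2
      obtain ⟨y, a, b, hy, ha, hab, hb, hw⟩ := hv1'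
      obtain ⟨z, c, d, hz, hc, hcd, hd, hu⟩ := hv2'
      have hprod : intvl m y a b = intvl m z c d * intvl m x k l := by
        rw [← hw, ← hu, ← hs]; group
      have hcases := key m x y z hx hy hz k l a b c d hk hkl hl ha hab hb hc hcd hd
        (intvl_mul_forall m x y z a b c d k l hprod)
      refine ⟨(y, a, b), ?_, ?_⟩
      · rw [hmem]
        rcases hcases with ⟨e1, e2, e3⟩ | ⟨e1, e2, e3⟩ | ⟨e1, e2, e3⟩ | ⟨e1, e2⟩ | ⟨e1, e2⟩
        · exact Or.inl ⟨e1, e2, hy, e3⟩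
        · exact Or.inr (Or.inl ⟨e1, e2, ha, by omega, e3⟩)
        · exact Or.inr (Or.inr (Or.inl ⟨e1, e2, by omega, hb, e3⟩))
        · exact Or.inr (Or.inr (Or.inr (Or.inl ⟨e1, e2, ha, by omega⟩)))
        · exact Or.inr (Or.inr (Or.inr (Or.inr ⟨e1, e2, by omega, hb⟩)))
      · show intvl m y a b * g = v
        rw [← hw, inv_mul_cancel_right]
    · rintro ⟨p, hp, rfl⟩
      obtain ⟨hp1, hp2, hp3, hp4⟩ := hcon p hp
      constructor
      · exact ⟨p.1, p.2.1, p.2.2, hp1, hp2, hp3, hp4, by rw [mul_inv_cancel_right]⟩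
      · show intvl m p.1 p.2.1 p.2.2 * g * h⁻¹ ∈ cS G m
        have hrw : intvl m p.1 p.2.1 p.2.2 * g * h⁻¹ =
            intvl m p.1 p.2.1 p.2.2 * (intvl m x k l)⁻¹ := by
          rw [← hs]; group
        rw [hrw]
        exact hprodmem p hp
  have hinj : Set.InjOn (fun p : G × ℕ × ℕ => intvl m p.1 p.2.1 p.2.2 * g) ↑F := by
    rintro p hp q hq he
    obtain ⟨c1, c2, c3, c4⟩ := hcon p hp
    obtain ⟨d1, d2, d3, d4⟩ := hcon q hq
    have he' : intvl m p.1 p.2.1 p.2.2 * g = intvl m q.1 q.2.1 q.2.2 * g := he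
    obtain ⟨e1, e2, e3⟩ := intvl_inj m p.1 q.1 p.2.1 p.2.2 q.2.1 q.2.2 c1 d1 c2 c3 c4
      d2 d3 d4 (mul_right_cancel he')
    exact Prod.ext e1 (Prod.ext e2 e3)
  have d12 : Disjoint F1 F2 := by
      rw [Finset.disjoint_left]
      rintro p hp hq
      simp only [hF1, hF2, hF3, hF4, hF5, Finset.mem_image, Finset.mem_erase,
        Finset.mem_Ico, Finset.mem_Ioc, Finset.mem_univ, and_true] at hp hq
      obtain ⟨u, hu, rfl⟩ := hp
      obtain ⟨w, hw, he⟩ := hq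
      rw [Prod.mk.injEq, Prod.mk.injEq] at he
      obtain ⟨he1, he2, he3⟩ := he
      omega
  have d13 : Disjoint F1 F3 := by
      rw [Finset.disjoint_left]
      rintro p hp hq
      simp only [hF1, hF2, hF3, hF4, hF5, Finset.mem_image, Finset.mem_erase,
        Finset.mem_Ico, Finset.mem_Ioc, Finset.mem_univ, and_true] at hp hq
      obtain ⟨u, hu, rfl⟩ := hp
      obtain ⟨w, hw, he⟩ := hq
      rw [Prod.mk.injEq, Prod.mk.injEq] at he
      obtain ⟨he1, he2, he3⟩ := he
      omega
  have d14 : Disjoint F1 F4 := by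
      rw [Finset.disjoint_left]
      rintro p hp hq
      simp only [hF1, hF2, hF3, hF4, hF5, Finset.mem_image, Finset.mem_erase,
        Finset.mem_Ico, Finset.mem_Ioc, Finset.mem_univ, and_true] at hp hq
      obtain ⟨u, hu, rfl⟩ := hp
      obtain ⟨w, hw, he⟩ := hq
      rw [Prod.mk.injEq, Prod.mk.injEq] at he
      obtain ⟨he1, he2, he3⟩ := he
      omega
  have d15 : Disjoint F1 F5 := by
      rw [Finset.disjoint_left]
      rintro p hp hq
      simp only [hF1, hF2, hF3, hF4, hF5, Finset.mem_image, Finset.mem_erase,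
        Finset.mem_Ico, Finset.mem_Ioc, Finset.mem_univ, and_true] at hp hq
      obtain ⟨u, hu, rfl⟩ := hp
      obtain ⟨w, hw, he⟩ := hq
      rw [Prod.mk.injEq, Prod.mk.injEq] at he
      obtain ⟨he1, he2, he3⟩ := he
      omega
  have d23 : Disjoint F2 F3 := by
      rw [Finset.disjoint_left]
      rintro p hp hq
      simp only [hF1, hF2, hF3, hF4, hF5, Finset.mem_image, Finset.mem_erase,
        Finset.mem_Ico, Finset.mem_Ioc, Finset.mem_univ, and_true] at hp hq
      obtain ⟨u, hu, rfl⟩ := hp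
      obtain ⟨w, hw, he⟩ := hq
      rw [Prod.mk.injEq, Prod.mk.injEq] at he
      obtain ⟨he1, he2, he3⟩ := he
      omega
  have d24 : Disjoint F2 F4 := by
      rw [Finset.disjoint_left]
      rintro p hp hq
      simp only [hF1, hF2, hF3, hF4, hF5, Finset.mem_image, Finset.mem_erase,
        Finset.mem_Ico, Finset.mem_Ioc, Finset.mem_univ, and_true] at hp hq
      obtain ⟨u, hu, rfl⟩ := hp
      obtain ⟨w, hw, he⟩ := hq
      rw [Prod.mk.injEq, Prod.mk.injEq] at he
      obtain ⟨he1, he2, he3⟩ := he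
      omega
  have d25 : Disjoint F2 F5 := by
      rw [Finset.disjoint_left]
      rintro p hp hq
      simp only [hF1, hF2, hF3, hF4, hF5, Finset.mem_image, Finset.mem_erase,
        Finset.mem_Ico, Finset.mem_Ioc, Finset.mem_univ, and_true] at hp hq
      obtain ⟨u, hu, rfl⟩ := hp
      obtain ⟨w, hw, he⟩ := hq
      rw [Prod.mk.injEq, Prod.mk.injEq] at he
      obtain ⟨he1, he2, he3⟩ := he
      omega
  have d34 : Disjoint F3 F4 := by
      rw [Finset.disjoint_left]
      rintro p hp hq
      simp only [hF1, hF2, hF3, hF4, hF5, Finset.mem_image, Finset.mem_erase,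
        Finset.mem_Ico, Finset.mem_Ioc, Finset.mem_univ, and_true] at hp hq
      obtain ⟨u, hu, rfl⟩ := hp
      obtain ⟨w, hw, he⟩ := hq
      rw [Prod.mk.injEq, Prod.mk.injEq] at he
      obtain ⟨he1, he2, he3⟩ := he
      omega
  have d35 : Disjoint F3 F5 := by
      rw [Finset.disjoint_left]
      rintro p hp hq
      simp only [hF1, hF2, hF3, hF4, hF5, Finset.mem_image, Finset.mem_erase,
        Finset.mem_Ico, Finset.mem_Ioc, Finset.mem_univ, and_true] at hp hq
      obtain ⟨u, hu, rfl⟩ := hp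
      obtain ⟨w, hw, he⟩ := hq
      rw [Prod.mk.injEq, Prod.mk.injEq] at he
      obtain ⟨he1, he2, he3⟩ := he
      omega
  have d45 : Disjoint F4 F5 := by
      rw [Finset.disjoint_left]
      rintro p hp hq
      simp only [hF1, hF2, hF3, hF4, hF5, Finset.mem_image, Finset.mem_erase,
        Finset.mem_Ico, Finset.mem_Ioc, Finset.mem_univ, and_true] at hp hq
      obtain ⟨u, hu, rfl⟩ := hp
      obtain ⟨w, hw, he⟩ := hq
      rw [Prod.mk.injEq, Prod.mk.injEq] at he
      obtain ⟨he1, he2, he3⟩ := he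
      omega
  have hcard : F.card = Fintype.card G + 2 * m - 4 := by
    have hu5 : Disjoint (F1 ∪ F2 ∪ F3 ∪ F4) F5 :=
      Finset.disjoint_union_left.mpr ⟨Finset.disjoint_union_left.mpr
        ⟨Finset.disjoint_union_left.mpr ⟨d15, d25⟩, d35⟩, d45⟩
    have hu4 : Disjoint (F1 ∪ F2 ∪ F3) F4 :=
      Finset.disjoint_union_left.mpr ⟨Finset.disjoint_union_left.mpr ⟨d14, d24⟩, d34⟩
    have hu3 : Disjoint (F1 ∪ F2) F3 := Finset.disjoint_union_left.mpr ⟨d13, d23⟩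
    have h1inj : Function.Injective (fun z : G => ((z, k, l) : G × ℕ × ℕ)) :=
      fun u v e => congrArg Prod.fst e
    have h2inj : Function.Injective (fun a : ℕ => ((x, a, l) : G × ℕ × ℕ)) :=
      fun u v e => congrArg (fun q : G × ℕ × ℕ => q.2.1) e
    have h3inj : Function.Injective (fun b : ℕ => ((x, k, b) : G × ℕ × ℕ)) :=
      fun u v e => congrArg (fun q : G × ℕ × ℕ => q.2.2) e
    have h4inj : Function.Injective (fun a : ℕ => ((x⁻¹, a, k) : G × ℕ × ℕ)) :=
      fun u v e => congrArg (fun q : G × ℕ × ℕ => q.2.1) e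
    have h5inj : Function.Injective (fun b : ℕ => ((x⁻¹, l, b) : G × ℕ × ℕ)) :=
      fun u v e => congrArg (fun q : G × ℕ × ℕ => q.2.2) e
    rw [hF, Finset.card_union_of_disjoint hu5, Finset.card_union_of_disjoint hu4,
      Finset.card_union_of_disjoint hu3, Finset.card_union_of_disjoint d12,
      hF1, hF2, hF3, hF4, hF5,
      Finset.card_image_of_injective _ h1inj, Finset.card_image_of_injective _ h2inj,
      Finset.card_image_of_injective _ h3inj, Finset.card_image_of_injective _ h4inj,
      Finset.card_image_of_injective _ h5inj,
      Finset.card_erase_of_mem (Finset.mem_erase.mpr ⟨hx, Finset.mem_univ x⟩),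
      Finset.card_erase_of_mem (Finset.mem_univ (1 : G)),
      Finset.card_erase_of_mem (Finset.mem_Ico.mpr ⟨hk, hkl⟩),
      Finset.card_erase_of_mem (Finset.mem_Ioc.mpr ⟨hkl, hl⟩),
      Finset.card_univ, Nat.card_Ico, Nat.card_Ico, Nat.card_Ioc, Nat.card_Ioc]
    omega
  rw [hset, Set.ncard_image_of_injOn hinj, Set.ncard_coe_finset, hcard]

end main

/-- `Cay(G^m, S)` is edge-regular with parameters
`(|G|^m, C(m+1,2)·(|G|−1), |G|+2m−4)`. -/
theorem edge_regular [Group G] [Fintype G] (m : ℕ) (hm : 1 < m)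
    (hG : 1 < Fintype.card G) :
    Fintype.card (Fin m → G) = Fintype.card G ^ m ∧
    (∀ g : Fin m → G, {h : Fin m → G | cAdj m g h}.ncard =
      Nat.choose (m + 1) 2 * (Fintype.card G - 1)) ∧
    (∀ g h : Fin m → G, cAdj m g h →
      {v : Fin m → G | cAdj m g v ∧ cAdj m h v}.ncard =
        Fintype.card G + 2 * m - 4) := by
  refine ⟨by simp [Fintype.card_fun], fun g => degree_count m hm g,
    fun g h hadj => common_count m hm hG g h hadj⟩


end CayleyStmt7
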